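/- arXiv:1902.07689 — 3 statements merged into one kernel-verified Lean document; each statement's English description precedes it below -/
import Mathlib

section
/- Let 𝓛 be a nest on a complex separable Hilbert space H, and let N, M ∈ 𝓛 with N ⊊ M. Then there exists x ∈ H such that M_x = M and M̂_x = N. -/
open scoped InnerProductSpace

variable {H : Type*} [NormedAddCommGroup H] [InnerProductSpace ℂ H]
  [CompleteSpace H] [TopologicalSpace.SeparableSpace H]

/-- A subspace lattice on `H`: a set of closed subspaces containing `⊥` and `⊤`,
closed under arbitrary intersections and closed linear spans. -/
def IsSubspaceLattice (𝓛 : Set (Submodule ℂ H)) : Prop :=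
  (∀ M ∈ 𝓛, IsClosed (M : Set H)) ∧ ⊥ ∈ 𝓛 ∧ ⊤ ∈ 𝓛 ∧
  (∀ S ⊆ 𝓛, sInf S ∈ 𝓛) ∧ (∀ S ⊆ 𝓛, (sSup S).topologicalClosure ∈ 𝓛)

/-- A nest: a totally ordered subspace lattice. -/
def IsNest (𝓛 : Set (Submodule ℂ H)) : Prop :=
  IsSubspaceLattice 𝓛 ∧ ∀ M ∈ 𝓛, ∀ N ∈ 𝓛, M ≤ N ∨ N ≤ M

/-- A continuous nest. -/
def IsContinuousNest (𝓛 : Set (Submodule ℂ H)) : Prop :=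
  IsNest 𝓛 ∧ ∀ M ∈ 𝓛, M = (sSup {N ∈ 𝓛 | N < M}).topologicalClosure

/-- `M_x`: the intersection of all members of `𝓛` containing `x`. -/
noncomputable def Mx (𝓛 : Set (Submodule ℂ H)) (x : H) : Submodule ℂ H :=
  sInf {M ∈ 𝓛 | x ∈ M}

/-- `M̂_x`: the closed span of all members of `𝓛` orthogonal to `x`. -/
noncomputable def Mhat (𝓛 : Set (Submodule ℂ H)) (x : H) : Submodule ℂ H :=
  (sSup {M ∈ 𝓛 | ∀ v ∈ M, inner ℂ x v = (0 : ℂ)}).topologicalClosure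

/-- `φ_T(M)`: the closed span of all members `M'` of `𝓛` with `T(M') ⊆ M`. -/
noncomputable def phiT (𝓛 : Set (Submodule ℂ H)) (T : H →L[ℂ] H) (M : Submodule ℂ H) :
    Submodule ℂ H :=
  (sSup {M' ∈ 𝓛 | ∀ v ∈ M', T v ∈ M}).topologicalClosure

/-- `Ψ_T(M)`: the intersection of all `M' ∈ 𝓛` with `φ_T(M') = φ_T(M)`. -/
noncomputable def PsiT (𝓛 : Set (Submodule ℂ H)) (T : H →L[ℂ] H) (M : Submodule ℂ H) :
    Submodule ℂ H :=
  sInf {M' ∈ 𝓛 | phiT 𝓛 T M' = phiT 𝓛 T M}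

/-- `σ_T(M)`: the closed span of all `M' ∈ 𝓛` with `φ_T(M') = φ_T(M)`. -/
noncomputable def sigmaT (𝓛 : Set (Submodule ℂ H)) (T : H →L[ℂ] H) (M : Submodule ℂ H) :
    Submodule ℂ H :=
  (sSup {M' ∈ 𝓛 | phiT 𝓛 T M' = phiT 𝓛 T M}).topologicalClosure

/-- The kernel map `ω_T`. -/
noncomputable def omegaT (𝓛 : Set (Submodule ℂ H)) (T : H →L[ℂ] H) (M : Submodule ℂ H) :
    Submodule ℂ H × Submodule ℂ H :=
  (phiT 𝓛 T M, PsiT 𝓛 T M)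

/-- The rank-one operator `x ⊗ y : z ↦ ⟨z, y⟩ x`. -/
noncomputable def rankOne (x y : H) : H →L[ℂ] H :=
  (innerSL ℂ y).smulRight x

/-- The nest algebra of a subspace lattice. -/
def nestAlg (𝓛 : Set (Submodule ℂ H)) : Set (H →L[ℂ] H) :=
  {T | ∀ M ∈ 𝓛, ∀ v ∈ M, T v ∈ M}

/-- Lie module over the nest algebra. -/
def IsLieModule (𝓛 : Set (Submodule ℂ H)) (𝓜 : Submodule ℂ (H →L[ℂ] H)) : Prop :=
  ∀ A ∈ 𝓜, ∀ T ∈ nestAlg 𝓛, A.comp T - T.comp A ∈ 𝓜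

/-- Orthogonal projection of a vector onto a closed subspace (junk value `0` if not closed). -/
noncomputable def projVec (N : Submodule ℂ H) (z : H) : H := by
  classical
  exact if h : IsClosed (N : Set H) then
    have : CompleteSpace N := h.completeSpace_coe
    (N.orthogonalProjection z : H)
  else 0

/-- In a separable Hilbert space, every chain of closed subspaces has a countable
cofinal subfamily. -/
lemma exists_countable_cofinal (S : Set (Submodule ℂ H))
    (hchain : ∀ K ∈ S, ∀ K' ∈ S, K ≤ K' ∨ K' ≤ K)
    (hclosed : ∀ K ∈ S, IsClosed (K : Set H)) :
    ∃ D : Set (Submodule ℂ H), D.Countable ∧ D ⊆ S ∧ ∀ K ∈ S, ∃ L ∈ D, K ≤ L := by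
  classical
  by_cases hmax : ∃ K₀ ∈ S, ∀ K ∈ S, K ≤ K₀
  · obtain ⟨K₀, hK₀S, hK₀⟩ := hmax
    exact ⟨{K₀}, Set.countable_singleton _, Set.singleton_subset_iff.2 hK₀S,
      fun K hK => ⟨K₀, rfl, hK₀ K hK⟩⟩
  haveI : SecondCountableTopology H :=
    UniformSpace.secondCountable_of_separable H
  set U : Set H := ⋃ K ∈ S, (K : Set H) with hU
  obtain ⟨c, hc_count, hc_dense⟩ := TopologicalSpace.exists_countable_dense (↥U)
  set D0 : Set H := Subtype.val '' c with hD0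
  have hD0U : D0 ⊆ U := by rintro _ ⟨u, _, rfl⟩; exact u.2
  have hUD0 : U ⊆ closure D0 := by
    intro u hu
    have h1 : (⟨u, hu⟩ : ↥U) ∈ closure c := hc_dense _
    exact (image_closure_subset_closure_image continuous_subtype_val) ⟨⟨u, hu⟩, h1, rfl⟩
  have hrep : ∀ u ∈ D0, ∃ K, K ∈ S ∧ u ∈ K := by
    intro u hu
    have := hD0U hu
    simp only [hU, Set.mem_iUnion] at this
    obtain ⟨K, hK, huK⟩ := this
    exact ⟨K, hK, huK⟩
  choose! f hf1 hf2 using hrep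
  refine ⟨f '' D0, (hc_count.image _).image _, ?_, ?_⟩
  · rintro _ ⟨u, hu, rfl⟩; exact hf1 u hu
  · intro K hK
    by_contra hcon
    push_neg at hcon
    apply hmax
    refine ⟨K, hK, fun K' hK' => ?_⟩
    have hD0K : D0 ⊆ (K : Set H) := by
      intro u hu
      have hfu : f u ≤ K := by
        rcases hchain K hK (f u) (hf1 u hu) with h | h
        · exact absurd h (hcon (f u) ⟨u, hu, rfl⟩)
        · exact h
      exact hfu (hf2 u hu)
    have hUK : U ⊆ (K : Set H) :=
      fun u hu => (closure_minimal hD0K (hclosed K hK)) (hUD0 hu)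
    intro x hx
    exact hUK (Set.mem_iUnion₂.2 ⟨K', hK', hx⟩)

/-- Baire category: a countable collection of proper closed subspaces of a Banach space
can be avoided by a single vector. -/
lemma exists_avoid_all {E : Type*} [NormedAddCommGroup E] [NormedSpace ℂ E] [CompleteSpace E]
    (C : Set (Submodule ℂ E)) (hcount : C.Countable)
    (hcl : ∀ p ∈ C, IsClosed (p : Set E)) (hpr : ∀ p ∈ C, p ≠ ⊤) :
    ∃ x : E, ∀ p ∈ C, x ∉ p := by
  have hd : Dense (⋂ p ∈ C, ((p : Set E)ᶜ)) := by
    refine dense_biInter_of_isOpen (fun p hp => (hcl p hp).isOpen_compl) hcount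
      (fun p hp => ?_)
    rw [← interior_eq_empty_iff_dense_compl]
    by_contra h
    exact hpr p hp (p.eq_top_of_nonempty_interior' (Set.nonempty_iff_ne_empty.2 h))
  obtain ⟨x, hx⟩ := hd.nonempty
  exact ⟨x, fun p hp => by simpa using Set.mem_iInter₂.1 hx p hp⟩

theorem stmt_0 (𝓛 : Set (Submodule ℂ H)) (h𝓛 : IsNest 𝓛)
    (N M : Submodule ℂ H) (hN : N ∈ 𝓛) (hM : M ∈ 𝓛) (hNM : N < M) :
    ∃ x : H, Mx 𝓛 x = M ∧ Mhat 𝓛 x = N := by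
  classical
  obtain ⟨⟨hcl, -, -, -, -⟩, hT⟩ := h𝓛
  haveI hNcomp : CompleteSpace N := (hcl N hN).completeSpace_coe
  set G : Submodule ℂ H := Nᗮ ⊓ M with hG
  have hGclosed : IsClosed (G : Set H) := by
    rw [hG, Submodule.coe_inf]
    exact (Submodule.isClosed_orthogonal N).inter (hcl M hM)
  -- countable cofinal family below M
  obtain ⟨Dup, hDup_count, hDup_sub, hDup_cof⟩ :=
    exists_countable_cofinal {K | K ∈ 𝓛 ∧ K < M}
      (fun K hK K' hK' => hT K hK.1 K' hK'.1)
      (fun K hK => hcl K hK.1)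
  -- countable coinitial family above N, via orthogonal complements
  obtain ⟨DT, hDT_count, hDT_sub, hDT_cof⟩ :=
    exists_countable_cofinal ((fun K => Kᗮ) '' {K | K ∈ 𝓛 ∧ N < K})
      (by
        rintro _ ⟨K, hK, rfl⟩ _ ⟨K', hK', rfl⟩
        rcases hT K hK.1 K' hK'.1 with h | h
        · exact Or.inr (Submodule.orthogonal_le h)
        · exact Or.inl (Submodule.orthogonal_le h))
      (by rintro _ ⟨K, hK, rfl⟩; exact Submodule.isClosed_orthogonal _)
  have hrep : ∀ P ∈ DT, ∃ K, (K ∈ 𝓛 ∧ N < K) ∧ Kᗮ = P := by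
    intro P hP
    obtain ⟨K, hK, hKP⟩ := hDT_sub hP
    exact ⟨K, hK, hKP⟩
  choose! g hg1 hg2 using hrep
  set Ddn : Set (Submodule ℂ H) := g '' DT with hDdn
  have hDdn_count : Ddn.Countable := hDT_count.image _
  have hDdn_sub : ∀ L ∈ Ddn, L ∈ 𝓛 ∧ N < L := by
    rintro _ ⟨P, hP, rfl⟩; exact hg1 P hP
  have hDdn_coinit : ∀ K, K ∈ 𝓛 → N < K → ∃ L ∈ Ddn, L ≤ K := by
    intro K hK hNK
    obtain ⟨P, hP, hKP⟩ := hDT_cof Kᗮ ⟨K, ⟨hK, hNK⟩, rfl⟩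
    refine ⟨g P, ⟨P, hP, rfl⟩, ?_⟩
    have h2 : Kᗮ ≤ (g P)ᗮ := (hg2 P hP).symm ▸ hKP
    haveI := (hcl K hK).completeSpace_coe
    haveI := (hcl _ (hg1 P hP).1).completeSpace_coe
    calc g P = (g P)ᗮᗮ := (Submodule.orthogonal_orthogonal _).symm
    _ ≤ Kᗮᗮ := Submodule.orthogonal_le h2
    _ = K := Submodule.orthogonal_orthogonal _
  -- witnesses of properness
  have hwit_up : ∀ K, K ∈ 𝓛 → K < M → ∃ z, z ∈ G ∧ z ∉ K := by
    intro K hK hKM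
    haveI := (hcl K hK).completeSpace_coe
    rcases hT K hK N hN with hKN | hNK
    · obtain ⟨y, hyM, hyN⟩ := SetLike.exists_of_lt hNM
      set z := y - (N.orthogonalProjection y : H) with hz
      have hzN : z ∈ Nᗮ := N.sub_starProjection_mem_orthogonal y
      have hzM : z ∈ M := M.sub_mem hyM (hNM.le (N.orthogonalProjection y).2)
      refine ⟨z, Submodule.mem_inf.2 ⟨hzN, hzM⟩, fun hzK => ?_⟩
      have hzz : z = 0 := inner_self_eq_zero.1
        ((Submodule.mem_orthogonal N z).1 hzN z (hKN hzK))
      rw [hz, sub_eq_zero] at hzz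
      exact hyN (hzz ▸ (N.orthogonalProjection y).2)
    · obtain ⟨y, hyM, hyK⟩ := SetLike.exists_of_lt hKM
      set z := y - (K.orthogonalProjection y : H) with hz
      have hzK' : z ∈ Kᗮ := K.sub_starProjection_mem_orthogonal y
      have hzN : z ∈ Nᗮ := Submodule.orthogonal_le hNK hzK'
      have hzM : z ∈ M := M.sub_mem hyM (hKM.le (K.orthogonalProjection y).2)
      refine ⟨z, Submodule.mem_inf.2 ⟨hzN, hzM⟩, fun hzK => ?_⟩
      have hzz : z = 0 := inner_self_eq_zero.1
        ((Submodule.mem_orthogonal K z).1 hzK' z hzK)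
      rw [hz, sub_eq_zero] at hzz
      exact hyK (hzz ▸ (K.orthogonalProjection y).2)
  have hwit_dn : ∀ K, K ∈ 𝓛 → N < K → ∃ z, z ∈ G ∧ z ∉ Kᗮ := by
    intro K hK hNK
    have hy : ∃ y, y ∈ K ∧ y ∈ M ∧ y ∉ N := by
      rcases hT K hK M hM with hKM | hMK
      · obtain ⟨y, hyK, hyN⟩ := SetLike.exists_of_lt hNK
        exact ⟨y, hyK, hKM hyK, hyN⟩
      · obtain ⟨y, hyM, hyN⟩ := SetLike.exists_of_lt hNM
        exact ⟨y, hMK hyM, hyM, hyN⟩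
    obtain ⟨y, hyK, hyM, hyN⟩ := hy
    set z := y - (N.orthogonalProjection y : H) with hz
    have hzN : z ∈ Nᗮ := N.sub_starProjection_mem_orthogonal y
    have hzM : z ∈ M := M.sub_mem hyM (hNM.le (N.orthogonalProjection y).2)
    refine ⟨z, Submodule.mem_inf.2 ⟨hzN, hzM⟩, fun hzK => ?_⟩
    have h1 : (inner ℂ y z : ℂ) = 0 := (Submodule.mem_orthogonal K z).1 hzK y hyK
    have h2 : (inner ℂ ((N.orthogonalProjection y : H)) z : ℂ) = 0 :=
      (Submodule.mem_orthogonal N z).1 hzN _ (N.orthogonalProjection y).2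
    have h3 : (inner ℂ z z : ℂ) = 0 := by
      have : (inner ℂ z z : ℂ) = inner ℂ y z - inner ℂ ((N.orthogonalProjection y : H)) z := by
        rw [← inner_sub_left]
      rw [this, h1, h2, sub_zero]
    have hz0 : z = 0 := inner_self_eq_zero.1 h3
    rw [hz, sub_eq_zero] at hz0
    exact hyN (hz0 ▸ (N.orthogonalProjection y).2)
  -- Baire category inside G
  haveI : CompleteSpace ↥G := hGclosed.completeSpace_coe
  set bad : Set (Submodule ℂ ↥G) :=
    (fun K => Submodule.comap G.subtype K) '' (Dup ∪ (fun K => Kᗮ) '' Ddn) with hbad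
  have hbad_count : bad.Countable :=
    ((hDup_count.union (hDdn_count.image _)).image _)
  have hbad_cl : ∀ p ∈ bad, IsClosed (p : Set ↥G) := by
    rintro _ ⟨P, hP, rfl⟩
    have hPcl : IsClosed (P : Set H) := by
      rcases hP with hP | ⟨L, hL, rfl⟩
      · exact hcl P (hDup_sub hP).1
      · exact Submodule.isClosed_orthogonal _
    have : ((Submodule.comap G.subtype P : Submodule ℂ ↥G) : Set ↥G)
        = Subtype.val ⁻¹' (P : Set H) := rfl
    rw [this]
    exact hPcl.preimage continuous_subtype_val
  have hbad_ne : ∀ p ∈ bad, p ≠ ⊤ := by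
    rintro _ ⟨P, hP, rfl⟩ htop
    rcases hP with hP | ⟨L, hL, rfl⟩
    · obtain ⟨z, hzG, hzP⟩ := hwit_up P (hDup_sub hP).1 (hDup_sub hP).2
      have : (⟨z, hzG⟩ : ↥G) ∈ Submodule.comap G.subtype P :=
        Submodule.eq_top_iff'.1 htop ⟨z, hzG⟩
      exact hzP (Submodule.mem_comap.1 this)
    · obtain ⟨z, hzG, hzP⟩ := hwit_dn L (hDdn_sub L hL).1 (hDdn_sub L hL).2
      have : (⟨z, hzG⟩ : ↥G) ∈ Submodule.comap G.subtype Lᗮ :=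
        Submodule.eq_top_iff'.1 htop ⟨z, hzG⟩
      exact hzP (Submodule.mem_comap.1 this)
  obtain ⟨x', hx'⟩ := exists_avoid_all bad hbad_count hbad_cl hbad_ne
  set x : H := (x' : H) with hxdef
  have hxG : x ∈ G := x'.2
  have hxN : x ∈ Nᗮ := (Submodule.mem_inf.1 hxG).1
  have hxM : x ∈ M := (Submodule.mem_inf.1 hxG).2
  have havoid_up : ∀ L ∈ Dup, x ∉ L := by
    intro L hL h
    exact hx' _ ⟨L, Or.inl hL, rfl⟩ (Submodule.mem_comap.2 h)
  have havoid_dn : ∀ L ∈ Ddn, x ∉ Lᗮ := by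
    intro L hL h
    exact hx' _ ⟨Lᗮ, Or.inr ⟨L, hL, rfl⟩, rfl⟩ (Submodule.mem_comap.2 h)
  refine ⟨x, ?_, ?_⟩
  · -- Mx = M
    apply le_antisymm
    · exact sInf_le ⟨hM, hxM⟩
    · apply le_sInf
      rintro K ⟨hK, hxK⟩
      rcases hT M hM K hK with h | h
      · exact h
      · rcases h.lt_or_eq with hlt | rfl
        · obtain ⟨L, hL, hKL⟩ := hDup_cof K ⟨hK, hlt⟩
          exact absurd (hKL hxK) (havoid_up L hL)
        · exact le_refl _
  · -- Mhat = N
    apply le_antisymm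
    · refine Submodule.topologicalClosure_minimal _ (sSup_le ?_) (hcl N hN)
      rintro K ⟨hK, hperp⟩
      rcases hT K hK N hN with h | h
      · exact h
      · rcases h.lt_or_eq with hlt | heq
        · obtain ⟨L, hL, hLK⟩ := hDdn_coinit K hK hlt
          exfalso
          apply havoid_dn L hL
          rw [Submodule.mem_orthogonal]
          intro u hu
          exact inner_eq_zero_symm.1 (hperp u (hLK hu))
        · exact heq.ge
    · have h1 : N ∈ {K | K ∈ 𝓛 ∧ ∀ v ∈ K, inner ℂ x v = (0 : ℂ)} :=
        ⟨hN, fun v hv => (Submodule.mem_orthogonal' N x).1 hxN v hv⟩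
      exact le_trans (le_sSup h1) (Submodule.le_topologicalClosure _)
end

section
/- Let 𝓛 be a nest on a complex separable Hilbert space H and let T be a bounded operator on H. Then the kernel set Ω_T is totally ordered by componentwise inclusion: for all M₁, M₂ ∈ 𝓛, either (φ_T(M₁) ⊆ φ_T(M₂) and Ψ_T(M₁) ⊆ Ψ_T(M₂)) or (φ_T(M₂) ⊆ φ_T(M₁) and Ψ_T(M₂) ⊆ Ψ_T(M₁)). -/
open scoped InnerProductSpace

variable {H : Type*} [NormedAddCommGroup H] [InnerProductSpace ℂ H]
  [CompleteSpace H] [TopologicalSpace.SeparableSpace H]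

lemma phiT_mono {H : Type*} [NormedAddCommGroup H] [InnerProductSpace ℂ H]
    (𝓛 : Set (Submodule ℂ H)) (T : H →L[ℂ] H) {M N : Submodule ℂ H}
    (h : M ≤ N) : phiT 𝓛 T M ≤ phiT 𝓛 T N := by
  apply Submodule.topologicalClosure_mono
  apply sSup_le_sSup
  rintro M' ⟨hm, hv⟩
  exact ⟨hm, fun v hvm => h (hv v hvm)⟩

lemma psiT_key {H : Type*} [NormedAddCommGroup H] [InnerProductSpace ℂ H]
    (𝓛 : Set (Submodule ℂ H)) (h𝓛 : IsNest 𝓛)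
    (T : H →L[ℂ] H) {M₁ M₂ : Submodule ℂ H} (h₁ : M₁ ∈ 𝓛) (h₂ : M₂ ∈ 𝓛)
    (hle : phiT 𝓛 T M₁ ≤ phiT 𝓛 T M₂) (hne : phiT 𝓛 T M₁ ≠ phiT 𝓛 T M₂) :
    PsiT 𝓛 T M₁ ≤ PsiT 𝓛 T M₂ := by
  apply le_sInf
  rintro M' ⟨hm', hphi⟩
  have hM1 : M₁ ≤ M' := by
    rcases h𝓛.2 M₁ h₁ M' hm' with h | h
    · exact h
    · exfalso
      exact hne (le_antisymm hle (hphi ▸ phiT_mono 𝓛 T h))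
  exact le_trans (sInf_le ⟨h₁, rfl⟩) hM1

theorem stmt_9 (𝓛 : Set (Submodule ℂ H)) (h𝓛 : IsNest 𝓛)
    (T : H →L[ℂ] H) (M₁ M₂ : Submodule ℂ H) (h₁ : M₁ ∈ 𝓛) (h₂ : M₂ ∈ 𝓛) :
    (phiT 𝓛 T M₁ ≤ phiT 𝓛 T M₂ ∧ PsiT 𝓛 T M₁ ≤ PsiT 𝓛 T M₂) ∨
    (phiT 𝓛 T M₂ ≤ phiT 𝓛 T M₁ ∧ PsiT 𝓛 T M₂ ≤ PsiT 𝓛 T M₁) := by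
  rcases h𝓛.2 M₁ h₁ M₂ h₂ with h | h
  · left
    have hphi := phiT_mono 𝓛 T h (M:=M₁) (N:=M₂)
    refine ⟨hphi, ?_⟩
    by_cases heq : phiT 𝓛 T M₁ = phiT 𝓛 T M₂
    · simp [PsiT, heq]
    · exact psiT_key 𝓛 h𝓛 T h₁ h₂ hphi heq
  · right
    have hphi := phiT_mono 𝓛 T h (M:=M₂) (N:=M₁)
    refine ⟨hphi, ?_⟩
    by_cases heq : phiT 𝓛 T M₂ = phiT 𝓛 T M₁
    · simp [PsiT, heq]
    · exact psiT_key 𝓛 h𝓛 T h₂ h₁ hphi heq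
end

section
/- Let 𝓛 be a continuous nest on a complex separable Hilbert space H and let T be a nonzero finite rank bounded operator on H. Let M₁, M₂ ∈ 𝓛 be such that ω_T(M₁) and ω_T(M₂) are consecutive elements of the kernel set Ω_T, i.e., φ_T(M₁) ⊆ φ_T(M₂) and Ψ_T(M₁) ⊆ Ψ_T(M₂), ω_T(M₁) ≠ ω_T(M₂), and there is no M ∈ 𝓛 with ω_T(M) strictly between ω_T(M₁) and ω_T(M₂) in the componentwise inclusion order. Then Ψ_T(M₂) = σ_T(Ψ_T(M₁)). -/
open scoped InnerProductSpace

variable {H : Type*} [NormedAddCommGroup H] [InnerProductSpace ℂ H]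
  [CompleteSpace H] [TopologicalSpace.SeparableSpace H]

section MyAux

variable (𝓛 : Set (Submodule ℂ H)) (T : H →L[ℂ] H)

lemma my_phiT_mem (h : IsSubspaceLattice 𝓛) (M : Submodule ℂ H) : phiT 𝓛 T M ∈ 𝓛 :=
  h.2.2.2.2 _ (fun _ hM' => hM'.1)

lemma my_PsiT_mem (h : IsSubspaceLattice 𝓛) (M : Submodule ℂ H) : PsiT 𝓛 T M ∈ 𝓛 :=
  h.2.2.2.1 _ (fun _ hM' => hM'.1)

lemma my_sigmaT_mem (h : IsSubspaceLattice 𝓛) (M : Submodule ℂ H) : sigmaT 𝓛 T M ∈ 𝓛 :=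
  h.2.2.2.2 _ (fun _ hM' => hM'.1)

lemma my_phiT_mono {M N : Submodule ℂ H} (hMN : M ≤ N) : phiT 𝓛 T M ≤ phiT 𝓛 T N := by
  apply Submodule.topologicalClosure_mono
  exact sSup_le_sSup (fun M' hM' => ⟨hM'.1, fun v hv => hMN (hM'.2 v hv)⟩)

lemma my_PsiT_le_self {M : Submodule ℂ H} (hM : M ∈ 𝓛) : PsiT 𝓛 T M ≤ M :=
  sInf_le ⟨hM, rfl⟩

lemma my_self_le_sigmaT {M : Submodule ℂ H} (hM : M ∈ 𝓛) : M ≤ sigmaT 𝓛 T M := by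
  have h : M ∈ {M' ∈ 𝓛 | phiT 𝓛 T M' = phiT 𝓛 T M} := ⟨hM, rfl⟩
  exact (le_sSup h).trans (Submodule.le_topologicalClosure _)

/-- If `N ∈ 𝓛` does not contain `φ_T(M'')`, then `T(N) ⊆ M''`. -/
lemma my_lemB (hn : IsNest 𝓛) {M'' N : Submodule ℂ H} (hM'' : M'' ∈ 𝓛) (hN : N ∈ 𝓛)
    (hlt : ¬ phiT 𝓛 T M'' ≤ N) : ∀ v ∈ N, T v ∈ M'' := by
  have hex : ∃ M' ∈ {M' ∈ 𝓛 | ∀ v ∈ M', T v ∈ M''}, ¬ M' ≤ N := by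
    by_contra hall
    push_neg at hall
    exact hlt (Submodule.topologicalClosure_minimal _ (sSup_le hall) (hn.1.1 N hN))
  obtain ⟨M', hM', hnle⟩ := hex
  have hle : N ≤ M' := (hn.2 M' hM'.1 N hN).resolve_left hnle
  exact fun v hv => hM'.2 v (hle hv)

lemma my_phiT_PsiT (hc : IsContinuousNest 𝓛) {M : Submodule ℂ H} (hM : M ∈ 𝓛) :
    phiT 𝓛 T (PsiT 𝓛 T M) = phiT 𝓛 T M := by
  refine le_antisymm (my_phiT_mono 𝓛 T (my_PsiT_le_self 𝓛 T hM)) ?_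
  have hmem : phiT 𝓛 T M ∈ 𝓛 := my_phiT_mem 𝓛 T hc.1.1 M
  have hcl := hc.2 _ hmem
  rw [hcl]
  apply Submodule.topologicalClosure_mono
  apply sSup_le_sSup
  rintro N ⟨hN, hNlt⟩
  refine ⟨hN, fun v hv => ?_⟩
  rw [PsiT]
  rw [Submodule.mem_sInf]
  rintro M'' ⟨hM''L, hM''phi⟩
  refine my_lemB 𝓛 T hc.1 hM''L hN ?_ v hv
  rw [hM''phi]
  exact (show N < phiT 𝓛 T M from hNlt).not_ge

lemma my_PsiT_mono (hn : IsNest 𝓛) {M N : Submodule ℂ H} (hM : M ∈ 𝓛)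
    (hMN : M ≤ N) : PsiT 𝓛 T M ≤ PsiT 𝓛 T N := by
  apply le_sInf
  rintro M'' ⟨hM''L, hM''phi⟩
  rcases hn.2 M hM M'' hM''L with h | h
  · exact (my_PsiT_le_self 𝓛 T hM).trans h
  · refine sInf_le ⟨hM''L, le_antisymm ?_ ?_⟩
    · exact my_phiT_mono 𝓛 T h
    · calc phiT 𝓛 T M ≤ phiT 𝓛 T N := my_phiT_mono 𝓛 T hMN
        _ = phiT 𝓛 T M'' := hM''phi.symm

end MyAux

theorem stmt_13 (𝓛 : Set (Submodule ℂ H)) (h𝓛 : IsContinuousNest 𝓛)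
    (T : H →L[ℂ] H) (hT : T ≠ 0)
    (hfin : FiniteDimensional ℂ (LinearMap.range (T : H →ₗ[ℂ] H)))
    (M₁ M₂ : Submodule ℂ H) (h₁ : M₁ ∈ 𝓛) (h₂ : M₂ ∈ 𝓛)
    (hle : phiT 𝓛 T M₁ ≤ phiT 𝓛 T M₂ ∧ PsiT 𝓛 T M₁ ≤ PsiT 𝓛 T M₂)
    (hne : omegaT 𝓛 T M₁ ≠ omegaT 𝓛 T M₂)
    (hconsec : ¬ ∃ M ∈ 𝓛,
        (phiT 𝓛 T M₁ ≤ phiT 𝓛 T M ∧ PsiT 𝓛 T M₁ ≤ PsiT 𝓛 T M) ∧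
        (phiT 𝓛 T M ≤ phiT 𝓛 T M₂ ∧ PsiT 𝓛 T M ≤ PsiT 𝓛 T M₂) ∧
        omegaT 𝓛 T M ≠ omegaT 𝓛 T M₁ ∧ omegaT 𝓛 T M ≠ omegaT 𝓛 T M₂) :
    PsiT 𝓛 T M₂ = sigmaT 𝓛 T (PsiT 𝓛 T M₁) := by
  obtain ⟨hn, hcont⟩ := h𝓛
  obtain ⟨hsl, hchain⟩ := hn
  have hcntn : IsContinuousNest 𝓛 := ⟨⟨hsl, hchain⟩, hcont⟩
  -- φ values are distinct
  have hPne : phiT 𝓛 T M₁ ≠ phiT 𝓛 T M₂ := by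
    intro h
    apply hne
    have hPsi : PsiT 𝓛 T M₁ = PsiT 𝓛 T M₂ := by unfold PsiT; rw [h]
    simp [omegaT, h, hPsi]
  -- Step 1 : σ(M₁) ≤ Ψ(M₂)
  have hSP : sigmaT 𝓛 T M₁ ≤ PsiT 𝓛 T M₂ := by
    refine Submodule.topologicalClosure_minimal _ (sSup_le ?_)
      (hsl.1 _ (my_PsiT_mem 𝓛 T hsl M₂))
    rintro M' ⟨hM'L, hM'phi⟩
    apply le_sInf
    rintro M'' ⟨hM''L, hM''phi⟩
    rcases hchain M' hM'L M'' hM''L with h | h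
    · exact h
    · exfalso
      apply hPne
      refine le_antisymm hle.1 ?_
      calc phiT 𝓛 T M₂ = phiT 𝓛 T M'' := hM''phi.symm
        _ ≤ phiT 𝓛 T M' := my_phiT_mono 𝓛 T h
        _ = phiT 𝓛 T M₁ := hM'phi
  -- Step 2 : Ψ(M₂) ≤ σ(M₁)
  have hPS : PsiT 𝓛 T M₂ ≤ sigmaT 𝓛 T M₁ := by
    by_contra hcon
    have hPmem : PsiT 𝓛 T M₂ ∈ 𝓛 := my_PsiT_mem 𝓛 T hsl M₂
    have hSmem : sigmaT 𝓛 T M₁ ∈ 𝓛 := my_sigmaT_mem 𝓛 T hsl M₁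
    -- use continuity to find N strictly between σ(M₁) and Ψ(M₂)
    have hex : ∃ N ∈ {N ∈ 𝓛 | N < PsiT 𝓛 T M₂}, ¬ N ≤ sigmaT 𝓛 T M₁ := by
      by_contra hall
      push_neg at hall
      apply hcon
      calc PsiT 𝓛 T M₂ = (sSup {N ∈ 𝓛 | N < PsiT 𝓛 T M₂}).topologicalClosure :=
            hcont _ hPmem
        _ ≤ sigmaT 𝓛 T M₁ :=
            Submodule.topologicalClosure_minimal _ (sSup_le hall) (hsl.1 _ hSmem)
    obtain ⟨N, ⟨hNL, hNlt⟩, hNnle⟩ := hex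
    have hSN : sigmaT 𝓛 T M₁ ≤ N := (hchain N hNL _ hSmem).resolve_left hNnle
    have hM₁N : M₁ ≤ N := (my_self_le_sigmaT 𝓛 T h₁).trans hSN
    have hNM₂ : N ≤ M₂ := hNlt.le.trans (my_PsiT_le_self 𝓛 T h₂)
    apply hconsec
    refine ⟨N, hNL, ⟨my_phiT_mono 𝓛 T hM₁N, my_PsiT_mono 𝓛 T ⟨hsl, hchain⟩ h₁ hM₁N⟩,
      ⟨my_phiT_mono 𝓛 T hNM₂, my_PsiT_mono 𝓛 T ⟨hsl, hchain⟩ hNL hNM₂⟩, ?_, ?_⟩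
    · -- ω(N) ≠ ω(M₁)
      intro heq
      have hphiN : phiT 𝓛 T N = phiT 𝓛 T M₁ := congrArg Prod.fst heq
      apply hNnle
      have hmem : N ∈ {M' ∈ 𝓛 | phiT 𝓛 T M' = phiT 𝓛 T M₁} := ⟨hNL, hphiN⟩
      exact (le_sSup hmem).trans (Submodule.le_topologicalClosure _)
    · -- ω(N) ≠ ω(M₂)
      intro heq
      have hpsiN : PsiT 𝓛 T N = PsiT 𝓛 T M₂ := congrArg Prod.snd heq
      have : PsiT 𝓛 T N < PsiT 𝓛 T M₂ := lt_of_le_of_lt (my_PsiT_le_self 𝓛 T hNL) hNlt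
      exact this.ne hpsiN
  -- conclude
  have hkey : PsiT 𝓛 T M₂ = sigmaT 𝓛 T M₁ := le_antisymm hPS hSP
  have hσ : sigmaT 𝓛 T (PsiT 𝓛 T M₁) = sigmaT 𝓛 T M₁ := by
    unfold sigmaT
    rw [my_phiT_PsiT 𝓛 T hcntn h₁]
  rw [hkey, hσ]
end
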